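/- Let w ∈ W and let I ⊆ B be a finite subset. The following are equivalent: (a) every reduced word (i_1, …, i_n) of w contains every element of I among its entries; (b) there exist a reduced word ω of w and a sublist ω' of ω without repeated entries whose set of entries is exactly I. Moreover, in case (b), the product w' of the simple reflections along ω' lies in W_I and satisfies ℓ(w') = |I| (so w' is a Coxeter element of W_I). -/

import Mathlib

noncomputable section
namespace StrongExchangeAux

open CoxeterSystem List Polynomial Chebyshev


lemma zmod2_add_self (a : ZMod 2) : a + a = 0 := by
  have h2 : (2 : ZMod 2) = 0 := rfl
  rw [← two_mul, h2, zero_mul]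


variable {B : Type*} (M : CoxeterMatrix B)


/-- The bilinear form coefficients of the Tits representation. -/
def tk (i j : B) : ℝ := -Real.cos (Real.pi / M i j)

lemma tk_self (i : B) : tk M i i = 1 := by
  simp [tk, M.diagonal i]

lemma tk_symm (i j : B) : tk M i j = tk M j i := by
  rw [tk, tk, M.symmetric i j]

/-- The linear functional `B(e_i, ·)`. -/
def tf (i : B) : (B →₀ ℝ) →ₗ[ℝ] ℝ :=
  Finsupp.linearCombination ℝ (fun j => tk M i j)

lemma tf_single (i j : B) : tf M i (Finsupp.single j 1) = tk M i j := by
  simp [tf]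

/-- The simple reflections of the Tits representation. -/
def ts (i : B) : Module.End ℝ (B →₀ ℝ) :=
  LinearMap.id - ((2:ℝ) • tf M i).smulRight (Finsupp.single i 1)

lemma ts_apply (i : B) (v : B →₀ ℝ) :
    ts M i v = v - (2 * tf M i v) • Finsupp.single i 1 := by
  simp [ts, smul_eq_mul]

lemma tf_ts (i : B) (v : B →₀ ℝ) : tf M i (ts M i v) = -(tf M i v) := by
  rw [ts_apply, map_sub, map_smul, tf_single, tk_self, smul_eq_mul]
  ring

lemma ts_apply_of_eq_zero (i : B) (v : B →₀ ℝ) (h : tf M i v = 0) : ts M i v = v := by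
  simp [ts_apply, h]

lemma ts_invol (i : B) : ts M i * ts M i = 1 := by
  apply LinearMap.ext
  intro v
  rw [Module.End.mul_apply]
  rw [ts_apply M i (ts M i v), tf_ts]
  rw [ts_apply]
  simp [sub_smul]





/-- Chebyshev-style power formula in a real algebra. -/
lemma cheb_pow {A : Type*} [Ring A] [Algebra ℝ A] (T : A) (x : ℝ)
    (h : T * T = (2 * x) • T - 1) (k : ℕ) :
    T ^ (k + 1) = (eval x (U ℝ (k : ℤ))) • T - (eval x (U ℝ ((k : ℤ) - 1))) • 1 := by
  induction k with
  | zero => simp [U_zero, U_neg_one]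
  | succ k ih =>
    have hU : U ℝ ((k : ℤ) + 1) = 2 * X * U ℝ (k : ℤ) - U ℝ ((k : ℤ) - 1) := by
      have := U_add_two ℝ ((k : ℤ) - 1)
      simpa [sub_add_cancel, show ((k : ℤ) - 1) + 2 = (k : ℤ) + 1 by ring,
        show ((k : ℤ) - 1) + 1 = (k : ℤ) by ring] using this
    have : T ^ (k + 1 + 1) = T ^ (k + 1) * T := pow_succ T (k+1)
    rw [show k + 1 + 1 = k + 2 from rfl] at this
    rw [this, ih, sub_mul, smul_mul_assoc, smul_mul_assoc, one_mul, h]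
    rw [smul_sub, smul_smul]
    push_cast
    rw [show ((k : ℤ) + 1 - 1) = (k : ℤ) by ring, hU]
    simp only [eval_sub, eval_mul, eval_ofNat, eval_X, sub_smul]
    ring_nf
    module

/-- If `c = cos (π / m)` with `2 ≤ m`, then the matrix of the dihedral rotation
has order dividing `m`. -/
lemma Tpow_eq_one (m : ℕ) (hm2 : 2 ≤ m) :
    (!![4 * Real.cos (Real.pi / m) ^ 2 - 1, -(2 * Real.cos (Real.pi / m));
        2 * Real.cos (Real.pi / m), -1] : Matrix (Fin 2) (Fin 2) ℝ) ^ m = 1 := by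
  set c : ℝ := Real.cos (Real.pi / m) with hc
  set T : Matrix (Fin 2) (Fin 2) ℝ := !![4 * c ^ 2 - 1, -(2 * c); 2 * c, -1] with hT
  have hT2 : T * T = (2 * (2 * c ^ 2 - 1)) • T - 1 := by
    ext a b
    fin_cases a <;> fin_cases b <;>
      simp [hT, Matrix.mul_apply, Fin.sum_univ_two, Matrix.one_apply] <;> ring
  have hcos2 : Real.cos (2 * (Real.pi / m)) = 2 * c ^ 2 - 1 := by
    rw [Real.cos_two_mul, hc]
  rcases eq_or_lt_of_le hm2 with h2 | h3
  · -- m = 2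
    have hc0 : c = 0 := by
      rw [hc, ← h2]
      norm_num
    have hTval : T = !![(-1 : ℝ), 0; 0, -1] := by
      rw [hT, hc0]; norm_num
    rw [← h2, hTval]
    ext a b
    fin_cases a <;> fin_cases b <;>
      simp [pow_two, Matrix.mul_apply, Fin.sum_univ_two, Matrix.one_apply]
  · -- 3 ≤ m
    have hmpos : (0:ℝ) < m := by positivity
    have h2m : (2:ℝ) < m := by exact_mod_cast h3
    have hsin : 0 < Real.sin (2 * (Real.pi / m)) := by
      apply Real.sin_pos_of_pos_of_lt_pi
      · positivity
      · rw [show 2 * (Real.pi / (m:ℝ)) = 2 * Real.pi / m by ring,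
          div_lt_iff₀ hmpos]
        nlinarith [Real.pi_pos]
    have key := cheb_pow T (2 * c ^ 2 - 1) hT2 (m - 1)
    have hm1 : m - 1 + 1 = m := by omega
    rw [hm1] at key
    have hcast : ((m - 1 : ℕ) : ℤ) = (m : ℤ) - 1 := by omega
    rw [hcast] at key
    have hu1 : eval (2 * c ^ 2 - 1) (U ℝ ((m : ℤ) - 1)) = 0 := by
      have h := U_real_cos (2 * (Real.pi / m)) ((m : ℤ) - 1)
      rw [hcos2] at h
      push_cast at h
      rw [show ((m : ℝ) - 1 + 1) = (m:ℝ) by ring,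
        show (m:ℝ) * (2 * (Real.pi / m)) = 2 * Real.pi by field_simp,
        Real.sin_two_pi] at h
      exact (mul_eq_zero.mp h).resolve_right (ne_of_gt hsin)
    have hu2 : eval (2 * c ^ 2 - 1) (U ℝ ((m : ℤ) - 1 - 1)) = -1 := by
      have h := U_real_cos (2 * (Real.pi / m)) ((m : ℤ) - 1 - 1)
      rw [hcos2] at h
      push_cast at h
      rw [show ((m : ℝ) - 1 - 1 + 1) = (m:ℝ) - 1 by ring,
        show ((m:ℝ) - 1) * (2 * (Real.pi / m)) = 2 * Real.pi - 2 * (Real.pi / m) by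
          field_simp] at h
      rw [Real.sin_sub, Real.sin_two_pi, Real.cos_two_pi] at h
      have h' : eval (2 * c ^ 2 - 1) (U ℝ ((m : ℤ) - 1 - 1)) * Real.sin (2 * (Real.pi / m))
          = (-1) * Real.sin (2 * (Real.pi / m)) := by rw [h]; ring
      exact mul_right_cancel₀ (ne_of_gt hsin) h'
    rw [key, hu1, hu2]
    simp

lemma ts_braid {i j : B} (m : ℕ) (hm : M i j = m) (hm2 : 2 ≤ m) :
    (ts M i * ts M j) ^ m = 1 := by
  set c : ℝ := Real.cos (Real.pi / m) with hc
  have htkij : tk M i j = -c := by rw [tk, hm, hc]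
  have htkji : tk M j i = -c := by rw [← tk_symm, htkij]
  set T : Matrix (Fin 2) (Fin 2) ℝ := !![4 * c ^ 2 - 1, -(2 * c); 2 * c, -1] with hT
  have hTm : T ^ m = 1 := Tpow_eq_one m hm2
  set ei : B →₀ ℝ := Finsupp.single i 1 with hei
  set ej : B →₀ ℝ := Finsupp.single j 1 with hej
  set A : Module.End ℝ (B →₀ ℝ) := ts M i * ts M j with hA
  have tsi_ei : ts M i ei = ei - (2:ℝ) • ei := by
    rw [ts_apply, hei, tf_single, tk_self, mul_one]
  have tsj_ej : ts M j ej = ej - (2:ℝ) • ej := by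
    rw [ts_apply, hej, tf_single, tk_self, mul_one]
  have tsi_ej : ts M i ej = ej + (2*c) • ei := by
    rw [ts_apply, hej, tf_single, htkij, ← hei]
    module
  have tsj_ei : ts M j ei = ei + (2*c) • ej := by
    rw [ts_apply, hei, tf_single, htkji, ← hej]
    module
  have hAei : A ei = ((4 * c ^ 2 - 1) * 1 + (-(2 * c)) * 0) • ei + ((2 * c) * 1 + (-1) * 0) • ej := by
    rw [hA, Module.End.mul_apply, tsj_ei, map_add, map_smul, tsi_ei, tsi_ej]
    module
  have hAej : A ej = ((4 * c ^ 2 - 1) * 0 + (-(2 * c)) * 1) • ei + ((2 * c) * 0 + (-1) * 1) • ej := by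
    rw [hA, Module.End.mul_apply, tsj_ej, map_sub, map_smul, tsi_ej]
    module
  have hspan : ∀ x y : ℝ, A (x • ei + y • ej) =
      ((4 * c ^ 2 - 1) * x + (-(2 * c)) * y) • ei + ((2 * c) * x + (-1) * y) • ej := by
    intro x y
    rw [map_add, map_smul, map_smul, hAei, hAej]
    module
  have hpow : ∀ (k : ℕ) (x y : ℝ), (A ^ k) (x • ei + y • ej) =
      ((T ^ k) 0 0 * x + (T ^ k) 0 1 * y) • ei + ((T ^ k) 1 0 * x + (T ^ k) 1 1 * y) • ej := by
    intro k
    induction k with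
    | zero =>
      intro x y
      simp [Matrix.one_apply]
    | succ k ih =>
      intro x y
      rw [pow_succ', Module.End.mul_apply, ih, hspan]
      have e00 : (T ^ (k+1)) 0 0 = T 0 0 * (T ^ k) 0 0 + T 0 1 * (T ^ k) 1 0 := by
        rw [pow_succ', Matrix.mul_apply, Fin.sum_univ_two]
      have e01 : (T ^ (k+1)) 0 1 = T 0 0 * (T ^ k) 0 1 + T 0 1 * (T ^ k) 1 1 := by
        rw [pow_succ', Matrix.mul_apply, Fin.sum_univ_two]
      have e10 : (T ^ (k+1)) 1 0 = T 1 0 * (T ^ k) 0 0 + T 1 1 * (T ^ k) 1 0 := by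
        rw [pow_succ', Matrix.mul_apply, Fin.sum_univ_two]
      have e11 : (T ^ (k+1)) 1 1 = T 1 0 * (T ^ k) 0 1 + T 1 1 * (T ^ k) 1 1 := by
        rw [pow_succ', Matrix.mul_apply, Fin.sum_univ_two]
      rw [e00, e01, e10, e11]
      have hT00 : T 0 0 = 4 * c ^ 2 - 1 := by rw [hT]; rfl
      have hT01 : T 0 1 = -(2 * c) := by rw [hT]; rfl
      have hT10 : T 1 0 = 2 * c := by rw [hT]; rfl
      have hT11 : T 1 1 = -1 := by rw [hT]; rfl
      rw [hT00, hT01, hT10, hT11]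
      module
  -- nondegeneracy
  have hmpos : (0:ℝ) < m := by positivity
  have hm1R : (1:ℝ) ≤ m := by exact_mod_cast (by omega : 1 ≤ m)
  have hm1R' : (1:ℝ) < m := by exact_mod_cast (by omega : 1 < m)
  have hc1 : c < 1 := by
    have h := Real.cos_lt_cos_of_nonneg_of_le_pi (le_refl 0)
      (div_le_self Real.pi_pos.le hm1R) (by positivity)
    rwa [Real.cos_zero, ← hc] at h
  have hcm1 : -1 < c := by
    have h := Real.cos_lt_cos_of_nonneg_of_le_pi (by positivity : (0:ℝ) ≤ Real.pi / m)
      (le_refl Real.pi) (div_lt_self Real.pi_pos hm1R')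
    rwa [Real.cos_pi, ← hc] at h
  have hd : 1 - c ^ 2 ≠ 0 := by nlinarith
  apply LinearMap.ext
  intro v
  set α : ℝ := tf M i v with hα
  set β : ℝ := tf M j v with hβ
  set x : ℝ := (α + c * β) / (1 - c ^ 2) with hx
  set y : ℝ := (β + c * α) / (1 - c ^ 2) with hy
  set r : (B →₀ ℝ) := v - x • ei - y • ej with hr
  have h1 : tf M i r = 0 := by
    rw [hr, map_sub, map_sub, map_smul, map_smul, hei, hej, tf_single, tf_single,
      tk_self, htkij, ← hα, hx, hy]
    simp only [smul_eq_mul]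
    field_simp
    ring
  have h2 : tf M j r = 0 := by
    rw [hr, map_sub, map_sub, map_smul, map_smul, hei, hej, tf_single, tf_single,
      tk_self, htkji, ← hβ, hx, hy]
    simp only [smul_eq_mul]
    field_simp
    ring
  have hAr : A r = r := by
    rw [hA, Module.End.mul_apply, ts_apply_of_eq_zero _ _ _ h2, ts_apply_of_eq_zero _ _ _ h1]
  have hAkr : ∀ k : ℕ, (A ^ k) r = r := by
    intro k
    induction k with
    | zero => simp
    | succ k ih => rw [pow_succ, Module.End.mul_apply, hAr, ih]
  have hv : v = (x • ei + y • ej) + r := by rw [hr]; abel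
  rw [Module.End.one_apply, hv, map_add, hpow, hAkr, hTm]
  simp [Matrix.one_apply]

lemma ts_liftable : M.IsLiftable (ts M) := by
  intro i j
  rcases eq_or_ne i j with rfl | hij
  · rw [M.diagonal i, pow_one]
    -- ts invol
    apply LinearMap.ext
    intro v
    rw [Module.End.mul_apply]
    rw [ts_apply M i (ts M i v)]
    have : tf M i (ts M i v) = -(tf M i v) := by
      rw [ts_apply, map_sub, map_smul, tf_single, tk_self, smul_eq_mul]
      ring
    rw [this, ts_apply]
    simp [sub_smul]
  · rcases Nat.eq_zero_or_pos (M i j) with h0 | hpos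
    · rw [h0, pow_zero]
    · have hm2 : 2 ≤ M i j := by
        have := M.off_diagonal i j hij
        omega
      exact ts_braid M (M i j) rfl hm2

theorem simple_injective {W : Type*} [Group W] (cs : CoxeterSystem M W) :
    Function.Injective cs.simple := by
  intro c j h
  by_contra hcj
  have h2 : ts M c = ts M j := by
    have h3 := congrArg (cs.lift ⟨ts M, ts_liftable M⟩) h
    rwa [cs.lift_apply_simple, cs.lift_apply_simple] at h3
  have h4 := congrArg (fun f : Module.End ℝ (B →₀ ℝ) => (f (Finsupp.single c 1)) c) h2
  simp only [ts_apply, tf_single, tk_self, mul_one] at h4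
  classical
  rw [Finsupp.sub_apply, Finsupp.sub_apply, Finsupp.smul_apply, Finsupp.smul_apply,
    Finsupp.single_apply, Finsupp.single_apply] at h4
  rw [if_pos rfl, if_neg (fun hh : j = c => hcj hh.symm)] at h4
  norm_num at h4



variable {W : Type*} [Group W] {M : CoxeterMatrix B} (cs : CoxeterSystem M W)


lemma ris_cons (i : B) (l : List B) : cs.rightInvSeq (i :: l) =
    ((cs.wordProd l)⁻¹ * (cs.simple i) * cs.wordProd l) :: cs.rightInvSeq l := rfl

lemma ris_append (l₁ l₂ : List B) : cs.rightInvSeq (l₁ ++ l₂) =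
    (cs.rightInvSeq l₁).map (fun u => (cs.wordProd l₂)⁻¹ * u * cs.wordProd l₂)
      ++ cs.rightInvSeq l₂ := by
  induction l₁ with
  | nil => simp
  | cons a l₁ ih =>
    rw [cons_append, ris_cons, ris_cons, ih, map_cons, cons_append]
    congr 1
    rw [cs.wordProd_append, mul_inv_rev]
    group

lemma lis_eq_map_ris (l : List B) : cs.leftInvSeq l =
    (cs.rightInvSeq l).map (fun u => cs.wordProd l * u * (cs.wordProd l)⁻¹) := by
  induction l with
  | nil => simp
  | cons a l ih =>
    rw [ris_cons, map_cons]
    show CoxeterSystem.leftInvSeq cs (a :: l) = _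
    rw [CoxeterSystem.leftInvSeq]
    congr 1
    · rw [cs.wordProd_cons, mul_inv_rev, cs.inv_simple]
      simp [mul_assoc, cs.simple_mul_simple_self]
    · rw [ih, map_map]
      apply List.map_congr_left
      intro u _
      simp only [Function.comp_apply, MulAut.conj_apply, cs.wordProd_cons, mul_inv_rev,
        cs.inv_simple]
      group

/-- The parity permutation: acts on `W × ZMod 2` tracking reflection conjugation
and counting. -/
def pr [DecidableEq W] (i : B) : Equiv.Perm (W × ZMod 2) where
  toFun p := (cs.simple i * p.1 * cs.simple i, p.2 + if p.1 = cs.simple i then 1 else 0)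
  invFun p := (cs.simple i * p.1 * cs.simple i, p.2 + if p.1 = cs.simple i then 1 else 0)
  left_inv := by
    intro ⟨t, e⟩
    have h1 : cs.simple i * (cs.simple i * t * cs.simple i) * cs.simple i = t := by
      have := cs.simple_mul_simple_self i
      rw [show cs.simple i * (cs.simple i * t * cs.simple i) * cs.simple i
        = (cs.simple i * cs.simple i) * t * (cs.simple i * cs.simple i) by group,
        this, one_mul, mul_one]
    have h2 : (cs.simple i * t * cs.simple i = cs.simple i) ↔ (t = cs.simple i) := by
      constructor
      · intro h
        calc t = cs.simple i * (cs.simple i * t * cs.simple i) * cs.simple i := h1.symm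
        _ = cs.simple i * cs.simple i * cs.simple i := by rw [h]
        _ = cs.simple i := by rw [cs.simple_mul_simple_self, one_mul]
      · intro h
        rw [h, cs.simple_mul_simple_self, one_mul]
    simp only [h1, h2]
    ext
    · rfl
    · simp only
      rcases eq_or_ne t (cs.simple i) with h | h
      · rw [if_pos h, add_assoc, zmod2_add_self, add_zero]
      · rw [if_neg h, add_zero, add_zero]
  right_inv := by
    intro ⟨t, e⟩
    have h1 : cs.simple i * (cs.simple i * t * cs.simple i) * cs.simple i = t := by
      have := cs.simple_mul_simple_self i
      rw [show cs.simple i * (cs.simple i * t * cs.simple i) * cs.simple i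
        = (cs.simple i * cs.simple i) * t * (cs.simple i * cs.simple i) by group,
        this, one_mul, mul_one]
    have h2 : (cs.simple i * t * cs.simple i = cs.simple i) ↔ (t = cs.simple i) := by
      constructor
      · intro h
        calc t = cs.simple i * (cs.simple i * t * cs.simple i) * cs.simple i := h1.symm
        _ = cs.simple i * cs.simple i * cs.simple i := by rw [h]
        _ = cs.simple i := by rw [cs.simple_mul_simple_self, one_mul]
      · intro h
        rw [h, cs.simple_mul_simple_self, one_mul]
    simp only [h1, h2]
    ext
    · rfl
    · simp only
      rcases eq_or_ne t (cs.simple i) with h | h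
      · rw [if_pos h, add_assoc, zmod2_add_self, add_zero]
      · rw [if_neg h, add_zero, add_zero]

lemma prod_map_pr_apply [DecidableEq W] (ω : List B) (t : W) (e : ZMod 2) :
    ((ω.map (pr cs)).prod) (t, e) =
      (cs.wordProd ω * t * (cs.wordProd ω)⁻¹,
        e + ((cs.rightInvSeq ω).count t : ZMod 2)) := by
  induction ω generalizing t e with
  | nil => simp
  | cons i ω ih =>
    rw [map_cons, prod_cons, Equiv.Perm.mul_apply, ih]
    show pr cs i (_, _) = _
    rw [pr]
    simp only [Equiv.coe_fn_mk]
    ext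
    · simp only [cs.wordProd_cons, mul_inv_rev, cs.inv_simple]
      group
    · simp only [cs.wordProd_cons, ris_cons, mul_inv_rev, cs.inv_simple]
      have hiff : (cs.wordProd ω * t * (cs.wordProd ω)⁻¹ = cs.simple i)
          ↔ ((cs.wordProd ω)⁻¹ * cs.simple i * cs.wordProd ω = t) := by
        constructor
        · intro h; rw [← h]; group
        · intro h; rw [← h]; group
      rw [List.count_cons]
      push_cast
      simp only [beq_iff_eq]
      rcases eq_or_ne ((cs.wordProd ω)⁻¹ * cs.simple i * cs.wordProd ω) t with h | h
      · rw [if_pos (hiff.mpr h), if_pos h, add_assoc]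
      · rw [if_neg (fun hh => h (hiff.mp hh)), if_neg h, add_zero, add_zero]

lemma prod_map_alternatingWord {G : Type*} [Monoid G] (f : B → G) (i j : B) (m : ℕ) :
    ((CoxeterSystem.alternatingWord i j (2 * m)).map f).prod = (f i * f j) ^ m := by
  induction m with
  | zero => simp [CoxeterSystem.alternatingWord]
  | succ m ih =>
    have h1 : 2 * (m + 1) = (2 * m + 1) + 1 := by omega
    rw [h1, CoxeterSystem.alternatingWord_succ, CoxeterSystem.alternatingWord_succ]
    rw [concat_eq_append, concat_eq_append, map_append, map_append, prod_append, prod_append]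
    simp only [map_cons, map_nil, prod_cons, prod_nil]
    rw [ih, pow_succ]
    simp [mul_assoc]

lemma conj_pow_aux (i j : B) (a t : ℕ) :
    ((cs.simple i * cs.simple j) ^ a)⁻¹ *
      (cs.simple j * (cs.simple i * cs.simple j) ^ t) * (cs.simple i * cs.simple j) ^ a
    = cs.simple j * (cs.simple i * cs.simple j) ^ (t + 2 * a) := by
  induction a with
  | zero => simp
  | succ a ih =>
    have hbase : ∀ u : ℕ, (cs.simple i * cs.simple j)⁻¹ *
        (cs.simple j * (cs.simple i * cs.simple j) ^ u) * (cs.simple i * cs.simple j)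
        = cs.simple j * (cs.simple i * cs.simple j) ^ (u + 2) := by
      intro u
      have hinv : (cs.simple i * cs.simple j)⁻¹ * cs.simple j
          = cs.simple j * (cs.simple i * cs.simple j) := by
        rw [mul_inv_rev, cs.inv_simple, cs.inv_simple]
        simp [mul_assoc, cs.simple_mul_simple_self]
      calc (cs.simple i * cs.simple j)⁻¹ *
            (cs.simple j * (cs.simple i * cs.simple j) ^ u) * (cs.simple i * cs.simple j)
          = ((cs.simple i * cs.simple j)⁻¹ * cs.simple j) *
            ((cs.simple i * cs.simple j) ^ u * (cs.simple i * cs.simple j)) := by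
            simp [mul_assoc]
        _ = cs.simple j * (cs.simple i * cs.simple j) *
            ((cs.simple i * cs.simple j) ^ u * (cs.simple i * cs.simple j)) := by rw [hinv]
        _ = cs.simple j * (cs.simple i * cs.simple j) ^ (u + 2) := by
            rw [show u + 2 = 1 + u + 1 by omega, pow_add, pow_add, pow_one]
            simp [mul_assoc]
    have hz : (cs.simple i * cs.simple j) ^ (a + 1)
        = (cs.simple i * cs.simple j) ^ a * (cs.simple i * cs.simple j) := pow_succ _ _
    rw [hz, mul_inv_rev]
    calc (cs.simple i * cs.simple j)⁻¹ * ((cs.simple i * cs.simple j) ^ a)⁻¹ *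
          (cs.simple j * (cs.simple i * cs.simple j) ^ t) *
          ((cs.simple i * cs.simple j) ^ a * (cs.simple i * cs.simple j))
        = (cs.simple i * cs.simple j)⁻¹ *
          (((cs.simple i * cs.simple j) ^ a)⁻¹ *
            (cs.simple j * (cs.simple i * cs.simple j) ^ t) *
            (cs.simple i * cs.simple j) ^ a) * (cs.simple i * cs.simple j) := by
          simp [mul_assoc]
      _ = (cs.simple i * cs.simple j)⁻¹ *
          (cs.simple j * (cs.simple i * cs.simple j) ^ (t + 2 * a)) *
          (cs.simple i * cs.simple j) := by rw [ih]
      _ = cs.simple j * (cs.simple i * cs.simple j) ^ (t + 2 * a + 2) := hbase _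
      _ = cs.simple j * (cs.simple i * cs.simple j) ^ (t + 2 * (a + 1)) := by
          rw [show t + 2 * (a + 1) = t + 2 * a + 2 by omega]

/-- Closed form for the right inversion sequence of an alternating word. -/
lemma ris_alternatingWord (i j : B) (n : ℕ) :
    cs.rightInvSeq (CoxeterSystem.alternatingWord i j n) =
      (List.range n).reverse.map
        (fun k => cs.simple j * (cs.simple i * cs.simple j) ^ k) := by
  induction n with
  | zero => simp [CoxeterSystem.alternatingWord]
  | succ n ih =>
    rw [CoxeterSystem.alternatingWord_succ', ris_cons, ih, List.range_succ, reverse_append]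
    simp only [reverse_cons, reverse_nil, nil_append, cons_append, map_cons]
    congr 1
    rw [cs.prod_alternatingWord_eq_mul_pow]
    rcases Nat.even_or_odd n with he | ho
    · rw [if_pos he, if_pos he, one_mul]
      have key := conj_pow_aux cs i j (n / 2) 0
      rw [pow_zero, mul_one] at key
      rw [key, zero_add, Nat.two_mul_div_two_of_even he]
    · have hne := Nat.not_even_iff_odd.mpr ho
      rw [if_neg hne, if_neg hne]
      have key := conj_pow_aux cs i j (n / 2) 1
      have hsjz : cs.simple j * (cs.simple i * cs.simple j) ^ 1
          = cs.simple j * cs.simple i * cs.simple j := by rw [pow_one, mul_assoc]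
      rw [hsjz] at key
      obtain ⟨c, rfl⟩ := ho
      rw [show 1 + 2 * ((2 * c + 1) / 2) = 2 * c + 1 by omega] at key
      rw [← key, mul_inv_rev, cs.inv_simple]
      simp [mul_assoc]


lemma pr_liftable [DecidableEq W] : M.IsLiftable (pr cs) := by
  intro i j
  apply Equiv.ext
  intro ⟨t, e⟩
  rw [← prod_map_alternatingWord (pr cs) i j (M i j)]
  rw [prod_map_pr_apply]
  have hπ : cs.wordProd (CoxeterSystem.alternatingWord i j (2 * M i j)) = 1 := by
    rw [cs.prod_alternatingWord_eq_mul_pow]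
    rw [if_pos (even_two_mul _), one_mul, Nat.mul_div_cancel_left _ (by norm_num : 0 < 2)]
    exact cs.simple_mul_simple_pow i j
  have hcount : Even ((cs.rightInvSeq (CoxeterSystem.alternatingWord i j (2 * M i j))).count t) := by
    rw [ris_alternatingWord, List.map_reverse, List.count_reverse]
    rw [show 2 * M i j = M i j + M i j by omega, List.range_add]
    rw [map_append, List.count_append]
    have hmapeq : (List.map (fun k => cs.simple j * (cs.simple i * cs.simple j) ^ k)
        (List.map (fun x => M i j + x) (List.range (M i j))))
        = List.map (fun k => cs.simple j * (cs.simple i * cs.simple j) ^ k)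
            (List.range (M i j)) := by
      rw [List.map_map]
      apply List.map_congr_left
      intro k _
      simp only [Function.comp_apply]
      rw [show M i j + k = k + M i j by omega, pow_add, cs.simple_mul_simple_pow i j, mul_one]
    rw [hmapeq]
    exact Even.add_self _
  obtain ⟨c, hc⟩ := hcount
  rw [hπ, Prod.ext_iff]
  constructor
  · simp
  · simp only [Equiv.Perm.one_apply]
    rw [hc]
    push_cast
    rw [← two_mul]
    have h2 : (2 : ZMod 2) = 0 := rfl
    rw [h2, zero_mul, add_zero]

/-- Parity of the number of occurrences of `t` in the right inversion sequence
depends only on the product of the word. -/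
lemma count_ris_parity [DecidableEq W] {ω ω' : List B} (h : cs.wordProd ω = cs.wordProd ω')
    (t : W) : ((cs.rightInvSeq ω).count t : ZMod 2) = ((cs.rightInvSeq ω').count t : ZMod 2) := by
  have hφ : ∀ υ : List B, (υ.map (pr cs)).prod
      = cs.lift ⟨pr cs, pr_liftable cs⟩ (cs.wordProd υ) := by
    intro υ
    rw [CoxeterSystem.wordProd, map_list_prod, List.map_map]
    congr 1
    apply List.map_congr_left
    intro b _
    simp only [Function.comp_apply]
    rw [cs.lift_apply_simple]
  have h1 := prod_map_pr_apply cs ω t 0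
  have h2 := prod_map_pr_apply cs ω' t 0
  rw [hφ ω] at h1
  rw [hφ ω', ← h] at h2
  have := h1.symm.trans h2
  rw [Prod.ext_iff] at this
  have h3 := this.2
  simpa using h3


lemma count_ris_reverse [DecidableEq W] (ρ : List B) (t : W) (ht : cs.IsReflection t)
    {v : W} (hv : cs.wordProd ρ = v) {i : B} (hi : v * cs.simple i * v⁻¹ = t) :
    (cs.rightInvSeq ρ.reverse).count t = (cs.rightInvSeq ρ).count (cs.simple i) := by
  rw [cs.rightInvSeq_reverse, List.count_reverse, lis_eq_map_ris, hv]
  have heq : t = (fun u => v * u * v⁻¹) (cs.simple i) := by simp [hi]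
  rw [heq]
  exact List.count_map_of_injective (cs.rightInvSeq ρ) (fun u => v * u * v⁻¹)
    (fun a b hab => mul_left_cancel (mul_right_cancel hab)) (cs.simple i)

lemma parity_flip [DecidableEq W] {t : W} (ht : cs.IsReflection t) (σ σ' : List B)
    (h : cs.wordProd σ' = cs.wordProd σ * t) :
    ((cs.rightInvSeq σ').count t : ZMod 2) = ((cs.rightInvSeq σ).count t : ZMod 2) + 1 := by
  obtain ⟨v, i, hvi⟩ := ht
  obtain ⟨ρ, hρ⟩ := cs.wordProd_surjective v
  set τ : List B := ρ ++ (i :: ρ.reverse) with hτ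
  have hπτ : cs.wordProd τ = t := by
    rw [hτ, cs.wordProd_append, cs.wordProd_cons, cs.wordProd_reverse, hρ, hvi, mul_assoc]
  have hπστ : cs.wordProd (σ ++ τ) = cs.wordProd σ' := by
    rw [cs.wordProd_append, hπτ, h]
  rw [count_ris_parity cs hπστ.symm t]
  -- now compute count on σ ++ τ
  rw [ris_append, List.count_append]
  have hconj1 : t = (fun u => (cs.wordProd τ)⁻¹ * u * cs.wordProd τ) t := by
    simp [hπτ]
  have hcnt1 : (List.count t (List.map (fun u => (cs.wordProd τ)⁻¹ * u * cs.wordProd τ)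
      (cs.rightInvSeq σ))) = List.count t (cs.rightInvSeq σ) := by
    conv_lhs => rw [hconj1]
    exact List.count_map_of_injective (cs.rightInvSeq σ)
      (fun u => (cs.wordProd τ)⁻¹ * u * cs.wordProd τ)
      (fun a b hab => mul_left_cancel (mul_right_cancel hab)) t
  rw [hcnt1]
  -- count t (ris τ)
  have hodd : List.count t (cs.rightInvSeq τ) =
      2 * List.count (cs.simple i) (cs.rightInvSeq ρ) + 1 := by
    rw [hτ, ris_append, List.count_append, ris_cons]
    have hπirev : cs.wordProd (i :: ρ.reverse) = cs.simple i * v⁻¹ := by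
      rw [cs.wordProd_cons, cs.wordProd_reverse, hρ]
    have hhead : (cs.wordProd ρ.reverse)⁻¹ * cs.simple i * cs.wordProd ρ.reverse = t := by
      rw [cs.wordProd_reverse, hρ, inv_inv, hvi]
    have hcnt2 : List.count t (List.map
        (fun u => (cs.wordProd (i :: ρ.reverse))⁻¹ * u * cs.wordProd (i :: ρ.reverse))
        (cs.rightInvSeq ρ)) = List.count (cs.simple i) (cs.rightInvSeq ρ) := by
      have ht' : t = (fun u => (cs.wordProd (i :: ρ.reverse))⁻¹ * u * cs.wordProd (i :: ρ.reverse))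
          (cs.simple i) := by
        rw [hπirev, hvi, mul_inv_rev, cs.inv_simple, inv_inv]
        simp [mul_assoc, cs.simple_mul_simple_self]
      conv_lhs => rw [ht']
      exact List.count_map_of_injective (cs.rightInvSeq ρ)
        (fun u => (cs.wordProd (i :: ρ.reverse))⁻¹ * u * cs.wordProd (i :: ρ.reverse))
        (fun a b hab => mul_left_cancel (mul_right_cancel hab)) (cs.simple i)
    rw [hcnt2, List.count_cons]
    simp only [beq_iff_eq]
    rw [if_pos hhead]
    have hcnt3 := count_ris_reverse cs ρ t ⟨v, i, hvi⟩ hρ hvi.symm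
    rw [hcnt3]
    omega
  rw [hodd]
  push_cast
  have h2 : (2 : ZMod 2) = 0 := rfl
  rw [h2]
  ring

/-- Strong exchange (membership form, right version). -/
lemma mem_ris_of_lt [DecidableEq W] {ω : List B} (hred : cs.IsReduced ω) {t : W}
    (ht : cs.IsReflection t)
    (hlt : cs.length (cs.wordProd ω * t) < cs.length (cs.wordProd ω)) :
    t ∈ cs.rightInvSeq ω := by
  by_contra hmem
  have h0 : List.count t (cs.rightInvSeq ω) = 0 := List.count_eq_zero.mpr hmem
  obtain ⟨σ', hσ'red, hσ'⟩ := cs.exists_reduced_word' (cs.wordProd ω * t)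
  have hflip := parity_flip cs ht ω σ' hσ'.symm
  rw [h0] at hflip
  push_cast at hflip
  have hne : List.count t (cs.rightInvSeq σ') ≠ 0 := by
    intro hz
    rw [hz] at hflip
    simp at hflip
  have hmem' : t ∈ cs.rightInvSeq σ' := by
    rw [← List.count_pos_iff]
    omega
  have hinv := cs.isRightInversion_of_mem_rightInvSeq hσ'red hmem'
  rw [← hσ'] at hinv
  have := hinv.2
  rw [mul_assoc, ht.mul_self, mul_one] at this
  exact Nat.lt_asymm hlt this

/-- Left exchange: removing a letter. -/
lemma left_exchange {ω : List B} (hred : cs.IsReduced ω) {j : B}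
    (hlt : cs.length (cs.simple j * cs.wordProd ω) < cs.length (cs.wordProd ω)) :
    ∃ ω₁ : List B, (∀ b ∈ ω₁, b ∈ ω) ∧ ω₁.length + 1 = ω.length ∧
      cs.wordProd ω₁ = cs.simple j * cs.wordProd ω := by
  classical
  have hrev : cs.IsReduced ω.reverse := (cs.isReduced_reverse_iff ω).mpr hred
  have hlen : cs.length (cs.wordProd ω.reverse * cs.simple j)
      < cs.length (cs.wordProd ω.reverse) := by
    rw [cs.wordProd_reverse]
    have h1 : (cs.wordProd ω)⁻¹ * cs.simple j = (cs.simple j * cs.wordProd ω)⁻¹ := by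
      rw [mul_inv_rev, cs.inv_simple]
    rw [h1, cs.length_inv, cs.length_inv]
    exact hlt
  have hmem := mem_ris_of_lt cs hrev (cs.isReflection_simple j) hlen
  obtain ⟨k, hk, hkeq⟩ := List.mem_iff_getElem.mp hmem
  have hk' : k < ω.reverse.length := by
    have h5 := cs.length_rightInvSeq ω.reverse
    omega
  have heq := cs.wordProd_mul_getD_rightInvSeq ω.reverse k
  rw [List.getD_eq_getElem _ _ hk, hkeq] at heq
  refine ⟨(ω.reverse.eraseIdx k).reverse, ?_, ?_, ?_⟩
  · intro b hb
    rw [List.mem_reverse] at hb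
    have := (List.eraseIdx_sublist ω.reverse k).subset hb
    rwa [List.mem_reverse] at this
  · have h6 : ω.reverse.length = ω.length := List.length_reverse
    rw [List.length_reverse, List.length_eraseIdx, if_pos hk']
    omega
  · rw [cs.wordProd_reverse, ← heq, cs.wordProd_reverse]
    rw [mul_inv_rev, cs.inv_simple, inv_inv]



/-- Deletion: any word admits a reduced word with the same product using only its letters. -/
lemma deletion (ω : List B) : ∃ ω₀ : List B, cs.IsReduced ω₀ ∧
    cs.wordProd ω₀ = cs.wordProd ω ∧ ∀ b ∈ ω₀, b ∈ ω := by
  classical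
  induction ω with
  | nil => exact ⟨[], by simp [CoxeterSystem.IsReduced], by simp, by simp⟩
  | cons j u ih =>
    obtain ⟨u₀, hred, hprod, hmem⟩ := ih
    rcases cs.length_simple_mul (cs.wordProd u) j with hup | hdown
    · refine ⟨j :: u₀, ?_, ?_, ?_⟩
      · show cs.length (cs.wordProd (j :: u₀)) = (j :: u₀).length
        rw [cs.wordProd_cons, hprod, hup, List.length_cons]
        rw [← hprod, hred]
      · rw [cs.wordProd_cons, cs.wordProd_cons, hprod]
      · intro b hb
        rcases List.mem_cons.mp hb with rfl | hb
        · exact List.mem_cons_self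
        · exact List.mem_cons_of_mem _ (hmem b hb)
    · have hdesc : cs.length (cs.simple j * cs.wordProd u₀) < cs.length (cs.wordProd u₀) := by
        rw [hprod]
        omega
      obtain ⟨ω₁, hmem₁, hlen₁, hprod₁⟩ := left_exchange cs hred hdesc
      refine ⟨ω₁, ?_, ?_, ?_⟩
      · show cs.length (cs.wordProd ω₁) = ω₁.length
        rw [hprod₁, hprod]
        have h2 : cs.length (cs.wordProd u₀) = u₀.length := hred
        rw [hprod] at h2
        omega
      · rw [hprod₁, hprod, cs.wordProd_cons]
      · intro b hb
        exact List.mem_cons_of_mem _ (hmem b (hmem₁ b hb))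

/-- If `s j` is a product of letters all lying in a list `L`, then `j ∈ L`. -/
lemma mem_of_simple_eq_wordProd {j : B} {ν : List B} (h : cs.simple j = cs.wordProd ν)
    {L : List B} (hsub : ∀ b ∈ ν, b ∈ L) : j ∈ L := by
  obtain ⟨ν₀, hred, hprod, hmem⟩ := deletion cs ν
  have hlen : ν₀.length = 1 := by
    have h1 : cs.length (cs.wordProd ν₀) = ν₀.length := hred
    rw [hprod, ← h, cs.length_simple] at h1
    omega
  obtain ⟨c, rfl⟩ := List.length_eq_one_iff.mp hlen
  have hc : cs.simple c = cs.simple j := by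
    rw [← cs.wordProd_singleton, hprod, ← h]
  have hcj : c = j := simple_injective M cs hc
  subst hcj
  exact hsub c (hmem c (List.mem_singleton_self c))

/-- Support invariance: every letter of a reduced word appears in any other reduced word
of the same element. -/
lemma support_subset : ∀ (n : ℕ) (ω ω' : List B), ω'.length ≤ n → cs.IsReduced ω →
    cs.IsReduced ω' → cs.wordProd ω = cs.wordProd ω' → ∀ j ∈ ω', j ∈ ω := by
  intro n
  induction n with
  | zero =>
    intro ω ω' hlen _ _ _ j hj
    rw [List.length_eq_zero_iff.mp (Nat.le_zero.mp hlen)] at hj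
    cases hj
  | succ n ih =>
    intro ω ω' hlen hred hred' hprod j hj
    match ω', hlen, hred', hprod, hj with
    | a :: v, hlen, hred', hprod, hj =>
      have hredlen : cs.length (cs.wordProd (a :: v)) = v.length + 1 := hred'
      have hπ : cs.wordProd ω = cs.simple a * cs.wordProd v := by
        rw [hprod, cs.wordProd_cons]
      have hdesc : cs.length (cs.simple a * cs.wordProd ω) < cs.length (cs.wordProd ω) := by
        have h1 : cs.simple a * cs.wordProd ω = cs.wordProd v := by
          rw [hπ, ← mul_assoc, cs.simple_mul_simple_self, one_mul]
        rw [h1, hprod, hredlen]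
        calc cs.length (cs.wordProd v) ≤ v.length := cs.length_wordProd_le v
        _ < v.length + 1 := Nat.lt_succ_self _
      obtain ⟨ω₁, hmem₁, hlen₁, hprod₁⟩ := left_exchange cs hred hdesc
      have hsa : cs.simple a = cs.wordProd (ω₁ ++ ω.reverse) := by
        rw [cs.wordProd_append, hprod₁, cs.wordProd_reverse, mul_assoc,
          mul_inv_cancel, mul_one]
      rcases List.mem_cons.mp hj with rfl | hjv
      · exact mem_of_simple_eq_wordProd cs hsa (by
          intro b hb
          rcases List.mem_append.mp hb with h1 | h1
          · exact hmem₁ b h1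
          · exact List.mem_reverse.mp h1)
      · -- j ∈ v
        have hπv : cs.wordProd ω₁ = cs.wordProd v := by
          rw [hprod₁, hπ, ← mul_assoc, cs.simple_mul_simple_self, one_mul]
        have hlω : cs.length (cs.wordProd ω) = ω.length := hred
        have hredω₁ : cs.IsReduced ω₁ := by
          show cs.length (cs.wordProd ω₁) = ω₁.length
          have h4 : cs.length (cs.simple a * cs.wordProd ω) + 1
              = cs.length (cs.wordProd ω) := by
            rcases cs.length_simple_mul (cs.wordProd ω) a with h5 | h5
            · omega
            · exact h5
          rw [hprod₁]
          omega
        have hredv : cs.IsReduced v := by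
          show cs.length (cs.wordProd v) = v.length
          have h2 : cs.length (cs.wordProd v) ≤ v.length := cs.length_wordProd_le v
          have h3 : ω₁.length = v.length := by
            have h4 : ω.length = cs.length (cs.wordProd (a :: v)) := by rw [← hprod, hred]
            rw [hredlen] at h4
            omega
          have h5 : cs.length (cs.wordProd ω₁) = ω₁.length := hredω₁
          rw [hπv] at h5
          omega
        have hj₁ : j ∈ ω₁ := by
          apply ih ω₁ v ?_ hredω₁ hredv hπv j hjv
          have : (a :: v).length ≤ n + 1 := hlen
          rw [List.length_cons] at this
          omega
        exact hmem₁ j hj₁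

/-- A word without repeated letters is reduced. -/
lemma nodup_isReduced {ν : List B} (h : ν.Nodup) : cs.IsReduced ν := by
  induction ν with
  | nil => simp [CoxeterSystem.IsReduced]
  | cons i u ih =>
    have hu : cs.IsReduced u := ih (List.nodup_cons.mp h).2
    show cs.length (cs.wordProd (i :: u)) = u.length + 1
    rw [cs.wordProd_cons]
    rcases cs.length_simple_mul (cs.wordProd u) i with hup | hdown
    · rw [hup, hu]
    · exfalso
      have hdesc : cs.length (cs.simple i * cs.wordProd u) < cs.length (cs.wordProd u) := by
        omega
      obtain ⟨ω₁, hmem₁, hlen₁, hprod₁⟩ := left_exchange cs hu hdesc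
      have hsa : cs.simple i = cs.wordProd (ω₁ ++ u.reverse) := by
        rw [cs.wordProd_append, hprod₁, cs.wordProd_reverse, mul_assoc,
          mul_inv_cancel, mul_one]
      have : i ∈ u := mem_of_simple_eq_wordProd cs hsa (by
        intro b hb
        rcases List.mem_append.mp hb with h1 | h1
        · exact hmem₁ b h1
        · exact List.mem_reverse.mp h1)
      exact (List.nodup_cons.mp h).1 this

end StrongExchangeAux
end

/-- Let `(W, S)` be a Coxeter system with simple reflections indexed by `B`, `w ∈ W`,
and `I ⊆ B` a finite subset. The following are equivalent: (a) every reduced word of `w`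
contains every element of `I` among its entries; (b) some reduced word `ω` of `w` has a
sublist `ω'` without repeated entries whose set of entries is exactly `I`. Moreover, in
case (b), the product `w'` of the simple reflections along `ω'` lies in `W_I` and has
length `|I|` (so `w'` is a Coxeter element of `W_I`). -/
theorem stmt_13 {B W : Type*} [Group W] {M : CoxeterMatrix B} (cs : CoxeterSystem M W)
    (w : W) (I : Finset B) :
    ((∀ ω : List B, cs.IsReduced ω → cs.wordProd ω = w → ∀ i ∈ I, i ∈ ω) ↔
      ∃ ω ω' : List B, cs.IsReduced ω ∧ cs.wordProd ω = w ∧ ω'.Sublist ω ∧ ω'.Nodup ∧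
        ∀ i, i ∈ ω' ↔ i ∈ I) ∧
    (∀ ω ω' : List B, cs.IsReduced ω → cs.wordProd ω = w → ω'.Sublist ω → ω'.Nodup →
      (∀ i, i ∈ ω' ↔ i ∈ I) →
      cs.wordProd ω' ∈ Subgroup.closure (cs.simple '' ↑I) ∧
        cs.length (cs.wordProd ω') = I.card) := by
  classical
  constructor
  · constructor
    · intro ha
      obtain ⟨ω, hred, hw⟩ := cs.exists_reduced_word' w
      refine ⟨ω, ω.dedup.filter (fun b => b ∈ I), hred, hw.symm, ?_, ?_, ?_⟩
      · exact List.filter_sublist.trans (List.dedup_sublist ω)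
      · exact (List.nodup_dedup ω).filter _
      · intro i
        simp only [List.mem_filter, List.mem_dedup, decide_eq_true_eq]
        constructor
        · exact fun h => h.2
        · exact fun hi => ⟨ha ω hred hw.symm i hi, hi⟩
    · rintro ⟨σ, σ', hredσ, hwσ, hsub, hnd, hmem⟩ ω hred hw i hi
      have hiσ : i ∈ σ := hsub.subset ((hmem i).mpr hi)
      exact StrongExchangeAux.support_subset cs σ.length ω σ le_rfl hred hredσ
        (by rw [hw, hwσ]) i hiσ
  · intro ω ω' hred hw hsub hnd hmem
    have hsubI : ∀ b ∈ ω', b ∈ I := fun b hb => (hmem b).mp hb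
    constructor
    · have hgen : ∀ ν : List B, (∀ b ∈ ν, b ∈ I) →
          cs.wordProd ν ∈ Subgroup.closure (cs.simple '' ↑I) := by
        intro ν
        induction ν with
        | nil =>
          intro _
          rw [cs.wordProd_nil]
          exact one_mem _
        | cons a u ih =>
          intro hb
          rw [cs.wordProd_cons]
          refine mul_mem (Subgroup.subset_closure ⟨a, ?_, rfl⟩)
            (ih fun b h => hb b (List.mem_cons_of_mem _ h))
          simpa using hb a (List.mem_cons_self)
      exact hgen ω' hsubI
    · have hred' : cs.IsReduced ω' := StrongExchangeAux.nodup_isReduced cs hnd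
      have hlen : cs.length (cs.wordProd ω') = ω'.length := hred'
      rw [hlen]
      have htf : ω'.toFinset = I := by
        ext b
        rw [List.mem_toFinset]
        exact hmem b
      rw [← htf, List.toFinset_card_of_nodup hnd]
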